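/- The groups PSL(2, 𝔽_5) and A_5 are isomorphic, i.e. there exists a group isomorphism PSL(2, ℤ/5) ≃ A_5. -/

import Mathlib

namespace PSLA5aux

abbrev Q5 := ZMod 5 × ZMod 5 × ZMod 5 × ZMod 5


def tbl : List (List (List (List (Equiv.Perm (Fin 5))))) :=
[
[
 [
  [1, 1, 1, 1, 1],
  [1, 1, 1, 1, 1],
  [1, 1, 1, 1, 1],
  [1, 1, 1, 1, 1],
  [1, 1, 1, 1, 1]],
 [
  [1, 1, 1, 1, 1],
  [1, 1, 1, 1, 1],
  [1, 1, 1, 1, 1],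
  [1, 1, 1, 1, 1],
  [⟨![0,3,4,1,2], ![0,3,4,1,2], by decide, by decide⟩, ⟨![4,1,2,0,3], ![3,1,2,4,0], by decide, by decide⟩, ⟨![2,0,3,4,1], ![1,4,0,2,3], by decide, by decide⟩, ⟨![3,4,1,2,0], ![4,2,3,0,1], by decide, by decide⟩, ⟨![1,2,0,3,4], ![2,0,1,3,4], by decide, by decide⟩]],
 [
  [1, 1, 1, 1, 1],
  [1, 1, 1, 1, 1],
  [⟨![0,2,1,4,3], ![0,2,1,4,3], by decide, by decide⟩, ⟨![3,0,2,1,4], ![1,3,2,0,4], by decide, by decide⟩, ⟨![4,3,0,2,1], ![2,4,3,1,0], by decide, by decide⟩, ⟨![1,4,3,0,2], ![3,0,4,2,1], by decide, by decide⟩, ⟨![2,1,4,3,0], ![4,1,0,3,2], by decide, by decide⟩],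
  [1, 1, 1, 1, 1],
  [1, 1, 1, 1, 1]],
 [
  [1, 1, 1, 1, 1],
  [1, 1, 1, 1, 1],
  [1, 1, 1, 1, 1],
  [⟨![0,2,1,4,3], ![0,2,1,4,3], by decide, by decide⟩, ⟨![2,1,4,3,0], ![4,1,0,3,2], by decide, by decide⟩, ⟨![1,4,3,0,2], ![3,0,4,2,1], by decide, by decide⟩, ⟨![4,3,0,2,1], ![2,4,3,1,0], by decide, by decide⟩, ⟨![3,0,2,1,4], ![1,3,2,0,4], by decide, by decide⟩],
  [1, 1, 1, 1, 1]],
 [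
  [1, 1, 1, 1, 1],
  [⟨![0,3,4,1,2], ![0,3,4,1,2], by decide, by decide⟩, ⟨![1,2,0,3,4], ![2,0,1,3,4], by decide, by decide⟩, ⟨![3,4,1,2,0], ![4,2,3,0,1], by decide, by decide⟩, ⟨![2,0,3,4,1], ![1,4,0,2,3], by decide, by decide⟩, ⟨![4,1,2,0,3], ![3,1,2,4,0], by decide, by decide⟩],
  [1, 1, 1, 1, 1],
  [1, 1, 1, 1, 1],
  [1, 1, 1, 1, 1]]],
[
 [
  [1, ⟨![0,1,2,3,4], ![0,1,2,3,4], by decide, by decide⟩, 1, 1, 1],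
  [1, ⟨![4,0,3,1,2], ![1,3,4,2,0], by decide, by decide⟩, 1, 1, 1],
  [1, ⟨![2,4,1,0,3], ![3,2,0,4,1], by decide, by decide⟩, 1, 1, 1],
  [1, ⟨![3,2,0,4,1], ![2,4,1,0,3], by decide, by decide⟩, 1, 1, 1],
  [1, ⟨![1,3,4,2,0], ![4,0,3,1,2], by decide, by decide⟩, 1, 1, 1]],
 [
  [1, ⟨![3,4,0,1,2], ![2,3,4,0,1], by decide, by decide⟩, 1, 1, 1],
  [1, 1, ⟨![1,2,4,0,3], ![3,0,1,4,2], by decide, by decide⟩, 1, 1],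
  [1, 1, 1, ⟨![0,3,2,4,1], ![0,4,2,1,3], by decide, by decide⟩, 1],
  [1, 1, 1, 1, ⟨![4,1,3,2,0], ![4,1,3,2,0], by decide, by decide⟩],
  [⟨![2,0,1,3,4], ![1,2,0,3,4], by decide, by decide⟩, 1, 1, 1, 1]],
 [
  [1, ⟨![1,2,3,4,0], ![4,0,1,2,3], by decide, by decide⟩, 1, 1, 1],
  [1, 1, 1, ⟨![0,3,1,2,4], ![0,2,3,1,4], by decide, by decide⟩, 1],
  [⟨![4,1,0,3,2], ![2,1,4,3,0], by decide, by decide⟩, 1, 1, 1, 1],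
  [1, 1, ⟨![2,0,4,1,3], ![1,3,0,4,2], by decide, by decide⟩, 1, 1],
  [1, 1, 1, 1, ⟨![3,4,2,0,1], ![3,4,2,0,1], by decide, by decide⟩]],
 [
  [1, ⟨![4,0,1,2,3], ![1,2,3,4,0], by decide, by decide⟩, 1, 1, 1],
  [1, 1, 1, 1, ⟨![2,4,0,3,1], ![2,4,0,3,1], by decide, by decide⟩],
  [1, 1, ⟨![3,2,4,1,0], ![4,3,1,0,2], by decide, by decide⟩, 1, 1],
  [⟨![1,3,2,0,4], ![3,0,2,1,4], by decide, by decide⟩, 1, 1, 1, 1],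
  [1, 1, 1, ⟨![0,1,3,4,2], ![0,1,4,2,3], by decide, by decide⟩, 1]],
 [
  [1, ⟨![2,3,4,0,1], ![3,4,0,1,2], by decide, by decide⟩, 1, 1, 1],
  [⟨![3,1,2,4,0], ![4,1,2,0,3], by decide, by decide⟩, 1, 1, 1, 1],
  [1, 1, 1, 1, ⟨![1,0,3,2,4], ![1,0,3,2,4], by decide, by decide⟩],
  [1, 1, 1, ⟨![0,4,1,3,2], ![0,2,4,3,1], by decide, by decide⟩, 1],
  [1, 1, ⟨![4,2,0,1,3], ![2,3,1,4,0], by decide, by decide⟩, 1, 1]]],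
[
 [
  [1, 1, 1, ⟨![0,4,3,2,1], ![0,4,3,2,1], by decide, by decide⟩, 1],
  [1, 1, 1, ⟨![3,1,4,0,2], ![3,1,4,0,2], by decide, by decide⟩, 1],
  [1, 1, 1, ⟨![4,2,1,3,0], ![4,2,1,3,0], by decide, by decide⟩, 1],
  [1, 1, 1, ⟨![1,0,2,4,3], ![1,0,2,4,3], by decide, by decide⟩, 1],
  [1, 1, 1, ⟨![2,3,0,1,4], ![2,3,0,1,4], by decide, by decide⟩, 1]],
 [
  [1, 1, 1, ⟨![1,0,4,3,2], ![1,0,4,3,2], by decide, by decide⟩, 1],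
  [1, ⟨![2,3,1,4,0], ![4,2,0,1,3], by decide, by decide⟩, 1, 1, 1],
  [1, 1, 1, 1, ⟨![0,4,2,1,3], ![0,3,2,4,1], by decide, by decide⟩],
  [1, 1, ⟨![3,1,0,2,4], ![2,1,3,0,4], by decide, by decide⟩, 1, 1],
  [⟨![4,2,3,0,1], ![3,4,1,2,0], by decide, by decide⟩, 1, 1, 1, 1]],
 [
  [1, 1, 1, ⟨![2,1,0,4,3], ![2,1,0,4,3], by decide, by decide⟩, 1],
  [1, 1, 1, 1, ⟨![0,2,3,1,4], ![0,3,1,2,4], by decide, by decide⟩],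
  [⟨![3,0,4,2,1], ![1,4,3,0,2], by decide, by decide⟩, 1, 1, 1, 1],
  [1, ⟨![4,3,1,0,2], ![3,2,4,1,0], by decide, by decide⟩, 1, 1, 1],
  [1, 1, ⟨![1,4,2,3,0], ![4,0,2,3,1], by decide, by decide⟩, 1, 1]],
 [
  [1, 1, 1, ⟨![3,2,1,0,4], ![3,2,1,0,4], by decide, by decide⟩, 1],
  [1, 1, ⟨![4,0,2,3,1], ![1,4,2,3,0], by decide, by decide⟩, 1, 1],
  [1, ⟨![1,3,0,4,2], ![2,0,4,1,3], by decide, by decide⟩, 1, 1, 1],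
  [⟨![2,4,3,1,0], ![4,3,0,2,1], by decide, by decide⟩, 1, 1, 1, 1],
  [1, 1, 1, 1, ⟨![0,1,4,2,3], ![0,1,3,4,2], by decide, by decide⟩]],
 [
  [1, 1, 1, ⟨![4,3,2,1,0], ![4,3,2,1,0], by decide, by decide⟩, 1],
  [⟨![1,4,0,2,3], ![2,0,3,4,1], by decide, by decide⟩, 1, 1, 1, 1],
  [1, 1, ⟨![2,1,3,0,4], ![3,1,0,2,4], by decide, by decide⟩, 1, 1],
  [1, 1, 1, 1, ⟨![0,2,4,3,1], ![0,4,1,3,2], by decide, by decide⟩],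
  [1, ⟨![3,0,1,4,2], ![1,2,4,0,3], by decide, by decide⟩, 1, 1, 1]]],
[
 [
  [1, 1, ⟨![0,4,3,2,1], ![0,4,3,2,1], by decide, by decide⟩, 1, 1],
  [1, 1, ⟨![2,3,0,1,4], ![2,3,0,1,4], by decide, by decide⟩, 1, 1],
  [1, 1, ⟨![1,0,2,4,3], ![1,0,2,4,3], by decide, by decide⟩, 1, 1],
  [1, 1, ⟨![4,2,1,3,0], ![4,2,1,3,0], by decide, by decide⟩, 1, 1],
  [1, 1, ⟨![3,1,4,0,2], ![3,1,4,0,2], by decide, by decide⟩, 1, 1]],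
 [
  [1, 1, ⟨![4,3,2,1,0], ![4,3,2,1,0], by decide, by decide⟩, 1, 1],
  [1, 1, 1, 1, ⟨![3,0,1,4,2], ![1,2,4,0,3], by decide, by decide⟩],
  [1, ⟨![0,2,4,3,1], ![0,4,1,3,2], by decide, by decide⟩, 1, 1, 1],
  [1, 1, 1, ⟨![2,1,3,0,4], ![3,1,0,2,4], by decide, by decide⟩, 1],
  [⟨![1,4,0,2,3], ![2,0,3,4,1], by decide, by decide⟩, 1, 1, 1, 1]],
 [
  [1, 1, ⟨![3,2,1,0,4], ![3,2,1,0,4], by decide, by decide⟩, 1, 1],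
  [1, ⟨![0,1,4,2,3], ![0,1,3,4,2], by decide, by decide⟩, 1, 1, 1],
  [⟨![2,4,3,1,0], ![4,3,0,2,1], by decide, by decide⟩, 1, 1, 1, 1],
  [1, 1, 1, 1, ⟨![1,3,0,4,2], ![2,0,4,1,3], by decide, by decide⟩],
  [1, 1, 1, ⟨![4,0,2,3,1], ![1,4,2,3,0], by decide, by decide⟩, 1]],
 [
  [1, 1, ⟨![2,1,0,4,3], ![2,1,0,4,3], by decide, by decide⟩, 1, 1],
  [1, 1, 1, ⟨![1,4,2,3,0], ![4,0,2,3,1], by decide, by decide⟩, 1],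
  [1, 1, 1, 1, ⟨![4,3,1,0,2], ![3,2,4,1,0], by decide, by decide⟩],
  [⟨![3,0,4,2,1], ![1,4,3,0,2], by decide, by decide⟩, 1, 1, 1, 1],
  [1, ⟨![0,2,3,1,4], ![0,3,1,2,4], by decide, by decide⟩, 1, 1, 1]],
 [
  [1, 1, ⟨![1,0,4,3,2], ![1,0,4,3,2], by decide, by decide⟩, 1, 1],
  [⟨![4,2,3,0,1], ![3,4,1,2,0], by decide, by decide⟩, 1, 1, 1, 1],
  [1, 1, 1, ⟨![3,1,0,2,4], ![2,1,3,0,4], by decide, by decide⟩, 1],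
  [1, ⟨![0,4,2,1,3], ![0,3,2,4,1], by decide, by decide⟩, 1, 1, 1],
  [1, 1, 1, 1, ⟨![2,3,1,4,0], ![4,2,0,1,3], by decide, by decide⟩]]],
[
 [
  [1, 1, 1, 1, ⟨![0,1,2,3,4], ![0,1,2,3,4], by decide, by decide⟩],
  [1, 1, 1, 1, ⟨![1,3,4,2,0], ![4,0,3,1,2], by decide, by decide⟩],
  [1, 1, 1, 1, ⟨![3,2,0,4,1], ![2,4,1,0,3], by decide, by decide⟩],
  [1, 1, 1, 1, ⟨![2,4,1,0,3], ![3,2,0,4,1], by decide, by decide⟩],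
  [1, 1, 1, 1, ⟨![4,0,3,1,2], ![1,3,4,2,0], by decide, by decide⟩]],
 [
  [1, 1, 1, 1, ⟨![2,3,4,0,1], ![3,4,0,1,2], by decide, by decide⟩],
  [1, 1, 1, ⟨![4,2,0,1,3], ![2,3,1,4,0], by decide, by decide⟩, 1],
  [1, 1, ⟨![0,4,1,3,2], ![0,2,4,3,1], by decide, by decide⟩, 1, 1],
  [1, ⟨![1,0,3,2,4], ![1,0,3,2,4], by decide, by decide⟩, 1, 1, 1],
  [⟨![3,1,2,4,0], ![4,1,2,0,3], by decide, by decide⟩, 1, 1, 1, 1]],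
 [
  [1, 1, 1, 1, ⟨![4,0,1,2,3], ![1,2,3,4,0], by decide, by decide⟩],
  [1, 1, ⟨![0,1,3,4,2], ![0,1,4,2,3], by decide, by decide⟩, 1, 1],
  [⟨![1,3,2,0,4], ![3,0,2,1,4], by decide, by decide⟩, 1, 1, 1, 1],
  [1, 1, 1, ⟨![3,2,4,1,0], ![4,3,1,0,2], by decide, by decide⟩, 1],
  [1, ⟨![2,4,0,3,1], ![2,4,0,3,1], by decide, by decide⟩, 1, 1, 1]],
 [
  [1, 1, 1, 1, ⟨![1,2,3,4,0], ![4,0,1,2,3], by decide, by decide⟩],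
  [1, ⟨![3,4,2,0,1], ![3,4,2,0,1], by decide, by decide⟩, 1, 1, 1],
  [1, 1, 1, ⟨![2,0,4,1,3], ![1,3,0,4,2], by decide, by decide⟩, 1],
  [⟨![4,1,0,3,2], ![2,1,4,3,0], by decide, by decide⟩, 1, 1, 1, 1],
  [1, 1, ⟨![0,3,1,2,4], ![0,2,3,1,4], by decide, by decide⟩, 1, 1]],
 [
  [1, 1, 1, 1, ⟨![3,4,0,1,2], ![2,3,4,0,1], by decide, by decide⟩],
  [⟨![2,0,1,3,4], ![1,2,0,3,4], by decide, by decide⟩, 1, 1, 1, 1],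
  [1, ⟨![4,1,3,2,0], ![4,1,3,2,0], by decide, by decide⟩, 1, 1, 1],
  [1, 1, ⟨![0,3,2,4,1], ![0,4,2,1,3], by decide, by decide⟩, 1, 1],
  [1, 1, 1, ⟨![1,2,4,0,3], ![3,0,1,4,2], by decide, by decide⟩, 1]]]]

def decL : List Q5 :=
[(0,1,4,0), (0,1,4,1), (0,1,4,2), (0,1,4,3), (0,1,4,4), (0,2,2,0), (0,2,2,1), (0,2,2,2), (0,2,2,3), (0,2,2,4), (0,3,3,0), (0,3,3,1), (0,3,3,2), (0,3,3,3), (0,3,3,4), (0,4,1,0), (0,4,1,1), (0,4,1,2), (0,4,1,3), (0,4,1,4), (1,0,0,1), (1,0,1,1), (1,0,2,1), (1,0,3,1), (1,0,4,1), (1,1,0,1), (1,1,1,2), (1,1,2,3), (1,1,3,4), (1,1,4,0), (1,2,0,1), (1,2,1,3), (1,2,2,0), (1,2,3,2), (1,2,4,4), (1,3,0,1), (1,3,1,4), (1,3,2,2), (1,3,3,0), (1,3,4,3), (1,4,0,1), (1,4,1,0), (1,4,2,4), (1,4,3,3), (1,4,4,2), (2,0,0,3), (2,0,1,3), (2,0,2,3),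 (2,0,3,3), (2,0,4,3), (2,1,0,3), (2,1,1,1), (2,1,2,4), (2,1,3,2), (2,1,4,0), (2,2,0,3), (2,2,1,4), (2,2,2,0), (2,2,3,1), (2,2,4,2), (2,3,0,3), (2,3,1,2), (2,3,2,1), (2,3,3,0), (2,3,4,4), (2,4,0,3), (2,4,1,0), (2,4,2,2), (2,4,3,4), (2,4,4,1), (3,0,0,2), (3,0,1,2), (3,0,2,2), (3,0,3,2), (3,0,4,2), (3,1,0,2), (3,1,1,4), (3,1,2,1), (3,1,3,3), (3,1,4,0), (3,2,0,2), (3,2,1,1), (3,2,2,0), (3,2,3,4), (3,2,4,3), (3,3,0,2), (3,3,1,3), (3,3,2,4), (3,3,3,0), (3,3,4,1), (3,4,0,2), (3,4,1,0), (3,4,2,3), (3,4,3,1), (3,4,4,4), (4,0,0,4), (4,0,1,4), (4,0,2,4), (4,0,3,4), (4,0,4,4), (4,1,0,4), (4,1,1,3), (4,1,2,2), (4,1,3,1), (4,1,4,0), (4,2,0,4), (4,2,1,2), (4,2,2,0), (4,2,3,3), (4,2,4,1), (4,3,0,4), (4,3,1,1), (4,3,2,3), (4,3,3,0), (4,3,4,2),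 (4,4,0,4), (4,4,1,0), (4,4,2,1), (4,4,3,2), (4,4,4,3)]

def pmul (x y : Q5) : Q5 :=
  (x.1*y.1 + x.2.1*y.2.2.1, x.1*y.2.1 + x.2.1*y.2.2.2,
   x.2.2.1*y.1 + x.2.2.2*y.2.2.1, x.2.2.1*y.2.1 + x.2.2.2*y.2.2.2)

def lookQ (x : Q5) : Equiv.Perm (Fin 5) :=
  ((((tbl.getD x.1.val []).getD x.2.1.val []).getD x.2.2.1.val []).getD x.2.2.2.val 1)

/-- Cheap Boolean check that `p * q = r` for permutations of `Fin 5`. -/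
def pbcomp (p q r : Equiv.Perm (Fin 5)) : Bool :=
  decide (p (q 0) = r 0) && decide (p (q 1) = r 1) && decide (p (q 2) = r 2) &&
  decide (p (q 3) = r 3) && decide (p (q 4) = r 4)

/-- Cheap Boolean equality check for permutations of `Fin 5`. -/
def pbeq (p q : Equiv.Perm (Fin 5)) : Bool :=
  decide (p 0 = q 0) && decide (p 1 = q 1) && decide (p 2 = q 2) &&
  decide (p 3 = q 3) && decide (p 4 = q 4)

lemma pbcomp_spec {p q r : Equiv.Perm (Fin 5)} (h : pbcomp p q r = true) : p * q = r := by
  simp only [pbcomp, Bool.and_eq_true, decide_eq_true_eq] at h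
  obtain ⟨⟨⟨⟨h0, h1⟩, h2⟩, h3⟩, h4⟩ := h
  refine Equiv.ext fun x => ?_
  fin_cases x <;> [exact h0; exact h1; exact h2; exact h3; exact h4]

lemma pbeq_spec {p q : Equiv.Perm (Fin 5)} (h : pbeq p q = true) : p = q := by
  simp only [pbeq, Bool.and_eq_true, decide_eq_true_eq] at h
  obtain ⟨⟨⟨⟨h0, h1⟩, h2⟩, h3⟩, h4⟩ := h
  refine Equiv.ext fun x => ?_
  fin_cases x <;> [exact h0; exact h1; exact h2; exact h3; exact h4]

lemma pbeq_refl (p : Equiv.Perm (Fin 5)) : pbeq p p = true := by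
  simp [pbeq]

set_option maxRecDepth 100000 in
set_option maxHeartbeats 100000000 in
lemma L1 : (decL.all fun x => decL.all fun y =>
    pbcomp (lookQ x) (lookQ y) (lookQ (pmul x y))) = true := by decide

set_option maxRecDepth 100000 in
set_option maxHeartbeats 100000000 in
lemma L2 : (decL.all fun x => decide (Equiv.Perm.sign (lookQ x) = 1)) = true := by decide

set_option maxRecDepth 100000 in
set_option maxHeartbeats 100000000 in
lemma L3 : (decL.all fun x => (!(pbeq (lookQ x) 1)) ||
    (decide (x = ((1:ZMod 5),(0:ZMod 5),(0:ZMod 5),(1:ZMod 5))) ||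
     decide (x = ((4:ZMod 5),(0:ZMod 5),(0:ZMod 5),(4:ZMod 5))))) = true := by decide

set_option maxRecDepth 100000 in
set_option maxHeartbeats 100000000 in
lemma L4 : ∀ a b c d : ZMod 5, a * d - b * c = 1 → (a, b, c, d) ∈ decL := by decide

set_option maxRecDepth 100000 in
set_option maxHeartbeats 100000000 in
lemma L5 : ∀ p : Equiv.Perm (Fin 5), Equiv.Perm.sign p = 1 →
    (decL.any fun x => pbeq (lookQ x) p) = true := by decide

set_option maxRecDepth 100000 in
set_option maxHeartbeats 100000000 in
lemma L6 : (decL.all fun x => decide (x.1 * x.2.2.2 - x.2.1 * x.2.2.1 = 1)) = true := by decide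

abbrev SL5 := Matrix.SpecialLinearGroup (Fin 2) (ZMod 5)

def quad (A : SL5) : Q5 := (A.1 0 0, A.1 0 1, A.1 1 0, A.1 1 1)

lemma quad_det (A : SL5) :
    (quad A).1 * (quad A).2.2.2 - (quad A).2.1 * (quad A).2.2.1 = 1 := by
  have h := A.2
  rw [Matrix.det_fin_two] at h
  exact h

lemma quad_mem (A : SL5) : quad A ∈ decL := L4 _ _ _ _ (quad_det A)

lemma quad_mul (A B : SL5) : quad (A * B) = pmul (quad A) (quad B) := by
  have h : (A * B).1 = A.1 * B.1 := rfl
  simp [quad, pmul, h, Matrix.mul_apply, Fin.sum_univ_two]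

def f0 : SL5 → Equiv.Perm (Fin 5) := fun A => lookQ (quad A)

lemma f0_mul (A B : SL5) : f0 (A * B) = f0 A * f0 B := by
  have h := List.all_eq_true.mp (List.all_eq_true.mp L1 _ (quad_mem A)) _ (quad_mem B)
  have h2 := pbcomp_spec h
  rw [f0, f0, f0, quad_mul]
  exact h2.symm

lemma quad_one : quad 1 = (1, 0, 0, 1) := by
  have h : (1 : SL5).1 = 1 := rfl
  simp [quad, h, Matrix.one_apply]

lemma f0_one : f0 1 = 1 := by
  rw [f0, quad_one]
  decide

def F : SL5 →* Equiv.Perm (Fin 5) :=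
  { toFun := f0, map_one' := f0_one, map_mul' := f0_mul }

lemma scalar_entries (r : ZMod 5) (A : SL5) (h : Matrix.scalar (Fin 2) r = A.1) :
    quad A = (r, 0, 0, r) := by
  simp [quad, ← h, Matrix.scalar_apply, Matrix.diagonal_apply]

lemma sq_eq (r : ZMod 5) (hr : r ^ 2 = 1) : r = 1 ∨ r = 4 := by
  revert r; decide

lemma center_le_ker : Subgroup.center SL5 ≤ F.ker := by
  intro A hA
  obtain ⟨r, hr, hsc⟩ := Matrix.SpecialLinearGroup.mem_center_iff.mp hA
  rw [Fintype.card_fin] at hr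
  have hq := scalar_entries r A hsc
  have hr' : r = 1 ∨ r = 4 := sq_eq r hr
  rw [MonoidHom.mem_ker]
  show f0 A = 1
  rw [f0, hq]
  rcases hr' with h | h <;> rw [h] <;> decide

lemma entries_eq (A : SL5) (a b c d : ZMod 5) (h : quad A = (a, b, c, d)) :
    A.1 = !![a, b; c, d] := by
  have h1 : A.1 0 0 = a := congrArg (fun x : Q5 => x.1) h
  have h2 : A.1 0 1 = b := congrArg (fun x : Q5 => x.2.1) h
  have h3 : A.1 1 0 = c := congrArg (fun x : Q5 => x.2.2.1) h
  have h4 : A.1 1 1 = d := congrArg (fun x : Q5 => x.2.2.2) h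
  conv_lhs => rw [Matrix.eta_fin_two A.1]
  rw [h1, h2, h3, h4]

lemma ker_le_center : F.ker ≤ Subgroup.center SL5 := by
  intro A hA
  rw [MonoidHom.mem_ker] at hA
  have hb : pbeq (lookQ (quad A)) 1 = true := by
    have : f0 A = 1 := hA
    rw [f0] at this
    rw [this]; exact pbeq_refl 1
  have h3 := List.all_eq_true.mp L3 _ (quad_mem A)
  rw [hb] at h3
  simp only [Bool.not_true, Bool.false_or, Bool.or_eq_true, decide_eq_true_eq] at h3
  apply Matrix.SpecialLinearGroup.mem_center_iff.mpr
  rcases h3 with h | h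
  · refine ⟨1, by norm_num, ?_⟩
    have := entries_eq A _ _ _ _ h
    rw [this]
    ext i j
    fin_cases i <;> fin_cases j <;>
      simp [Matrix.scalar_apply, Matrix.diagonal_apply]
  · refine ⟨4, by decide, ?_⟩
    have := entries_eq A _ _ _ _ h
    rw [this]
    ext i j
    fin_cases i <;> fin_cases j <;>
      simp [Matrix.scalar_apply, Matrix.diagonal_apply]

end PSLA5aux

/-- The projective special linear group `PSL(n, F)`: the quotient of `SL(n, F)` by its center. -/
abbrev PSL (n : ℕ) (F : Type) [Field F] :=
  Matrix.SpecialLinearGroup (Fin n) F ⧸ Subgroup.center (Matrix.SpecialLinearGroup (Fin n) F)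

instance : Fact (Nat.Prime 5) := ⟨by norm_num⟩

namespace PSLA5aux

def ψ : PSL 2 (ZMod 5) →* Equiv.Perm (Fin 5) :=
  QuotientGroup.lift (Subgroup.center SL5) F
    (fun a ha => MonoidHom.mem_ker.mp (center_le_ker ha))

lemma psi_mk (A : SL5) : ψ (QuotientGroup.mk A) = f0 A := rfl

lemma psi_inj : Function.Injective ψ := by
  rw [injective_iff_map_eq_one]
  intro x hx
  induction x using QuotientGroup.induction_on with
  | H A =>
    rw [psi_mk] at hx
    exact (QuotientGroup.eq_one_iff A).mpr
      (ker_le_center (MonoidHom.mem_ker.mpr hx))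

lemma psi_mem (x : PSL 2 (ZMod 5)) : ψ x ∈ alternatingGroup (Fin 5) := by
  induction x using QuotientGroup.induction_on with
  | H A =>
    rw [psi_mk]
    rw [Equiv.Perm.mem_alternatingGroup]
    have h := List.all_eq_true.mp L2 _ (quad_mem A)
    exact of_decide_eq_true h

lemma psi_surj : ∀ p : Equiv.Perm (Fin 5), p ∈ alternatingGroup (Fin 5) →
    ∃ x, ψ x = p := by
  intro p hp
  have h5 := L5 p (Equiv.Perm.mem_alternatingGroup.mp hp)
  obtain ⟨q, hqm, hq⟩ := List.any_eq_true.mp h5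
  have hdet := of_decide_eq_true (List.all_eq_true.mp L6 _ hqm)
  refine ⟨QuotientGroup.mk ⟨!![q.1, q.2.1; q.2.2.1, q.2.2.2], ?_⟩, ?_⟩
  · rw [Matrix.det_fin_two_of]
    exact hdet
  · show f0 (⟨!![q.1, q.2.1; q.2.2.1, q.2.2.2], by rw [Matrix.det_fin_two_of]; exact hdet⟩ : SL5) = p
    have hquad : quad ⟨!![q.1, q.2.1; q.2.2.1, q.2.2.2], by
        rw [Matrix.det_fin_two_of]; exact hdet⟩ = q := by
      simp [quad]
    refine Eq.trans (congrArg lookQ hquad) ?_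
    exact pbeq_spec hq

end PSLA5aux

/-- The groups `PSL(2, 𝔽_5)` and `A_5` are isomorphic. -/
theorem psl_two_five_iso_alternating_five :
    Nonempty (PSL 2 (ZMod 5) ≃* alternatingGroup (Fin 5)) := by
  refine ⟨MulEquiv.ofBijective
    (PSLA5aux.ψ.codRestrict (alternatingGroup (Fin 5)) PSLA5aux.psi_mem) ⟨?_, ?_⟩⟩
  · intro x y hxy
    exact PSLA5aux.psi_inj (congrArg Subtype.val hxy)
  · rintro ⟨p, hp⟩
    obtain ⟨x, hx⟩ := PSLA5aux.psi_surj p hp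
    exact ⟨x, Subtype.ext hx⟩
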